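/- Let g be a cusp form with multiplicative Hecke eigenvalues λ_g(n) satisfying the Hecke relation λ_g(ab) = Σ_{d | gcd(a,b)} μ(d) χ(d) λ_g(a/d) λ_g(b/d), and let d₁ be a squarefree positive integer. Then as formal Dirichlet series, Σ_m λ_g(d₁ m²) m^{−s} = λ_g(d₁) · ∏_{p | d₁} (1 + χ(p) p^{−s})^{−1} · Σ_m λ_g(m²) m^{−s}. -/

import Mathlib

open ArithmeticFunction Finset

lemma sum_divisors_sigma_eq {M : Type*} [AddCommMonoid M] (a b : ℕ) (ha : 0 < a) (hb : 0 < b)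
    (F : ℕ → ℕ → M) :
    ∑ k ∈ (Nat.gcd a b).divisors, ∑ d ∈ (Nat.gcd (a / k) (b / k)).divisors, F k d =
      ∑ m ∈ (Nat.gcd a b).divisors, ∑ p ∈ m.divisorsAntidiagonal, F p.1 p.2 := by
  set N := Nat.gcd a b with hN
  have hN0 : N ≠ 0 := Nat.gcd_ne_zero_left ha.ne'
  rw [Finset.sum_sigma', Finset.sum_sigma']
  refine Finset.sum_nbij' (fun x => ⟨x.1 * x.2, (x.1, x.2)⟩) (fun y => ⟨y.2.1, y.2.2⟩) ?_ ?_ ?_ ?_ ?_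
  · rintro ⟨k, d⟩ hx
    simp only [Finset.mem_sigma, Nat.mem_divisors, Nat.mem_divisorsAntidiagonal] at hx ⊢
    obtain ⟨⟨hkN, -⟩, hd, -⟩ := hx
    have hka : k ∣ a := hkN.trans (Nat.gcd_dvd_left a b)
    have hkb : k ∣ b := hkN.trans (Nat.gcd_dvd_right a b)
    have hda : d ∣ a / k := hd.trans (Nat.gcd_dvd_left _ _)
    have hdb : d ∣ b / k := hd.trans (Nat.gcd_dvd_right _ _)
    have h1 : k * d ∣ a := by
      obtain ⟨c, hc⟩ := hda
      exact ⟨c, by rw [← Nat.div_mul_cancel hka, hc]; ring⟩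
    have h2 : k * d ∣ b := by
      obtain ⟨c, hc⟩ := hdb
      exact ⟨c, by rw [← Nat.div_mul_cancel hkb, hc]; ring⟩
    have hkd : k * d ∣ N := Nat.dvd_gcd h1 h2
    exact ⟨⟨hkd, hN0⟩, trivial, fun h => hN0 (Nat.eq_zero_of_zero_dvd (h ▸ hkd))⟩
  · rintro ⟨m, k, d⟩ hy
    simp only [Finset.mem_sigma, Nat.mem_divisors, Nat.mem_divisorsAntidiagonal] at hy ⊢
    obtain ⟨⟨hmN, -⟩, hkd, hm0⟩ := hy
    subst hkd
    have hka : k ∣ a := (dvd_mul_right k d).trans (hmN.trans (Nat.gcd_dvd_left a b))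
    have hkb : k ∣ b := (dvd_mul_right k d).trans (hmN.trans (Nat.gcd_dvd_right a b))
    have hda : d ∣ a / k := by
      rw [Nat.dvd_div_iff_mul_dvd hka, mul_comm]
      exact (mul_comm k d ▸ hmN).trans (Nat.gcd_dvd_left a b)
    have hdb : d ∣ b / k := by
      rw [Nat.dvd_div_iff_mul_dvd hkb, mul_comm]
      exact (mul_comm k d ▸ hmN).trans (Nat.gcd_dvd_right a b)
    have : 0 < a / k := Nat.div_pos (Nat.le_of_dvd ha hka) (Nat.pos_of_dvd_of_pos hka ha)
    exact ⟨⟨(dvd_mul_right k d).trans hmN, hN0⟩, Nat.dvd_gcd hda hdb,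
      Nat.gcd_ne_zero_left this.ne'⟩
  · rintro ⟨k, d⟩ hx; rfl
  · rintro ⟨m, k, d⟩ hy
    simp only [Finset.mem_sigma, Nat.mem_divisorsAntidiagonal] at hy
    obtain ⟨-, h1, -⟩ := hy
    subst h1
    rfl
  · rintro ⟨k, d⟩ hx; rfl

lemma sum_moebius_snd (m : ℕ) :
    ∑ p ∈ m.divisorsAntidiagonal, ((moebius p.2 : ℤ) : ℂ) = if m = 1 then 1 else 0 := by
  have h : (((zeta : ArithmeticFunction ℤ) * moebius) m : ℤ) = ∑ p ∈ m.divisorsAntidiagonal,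
      (zeta p.1 : ℤ) * moebius p.2 := ArithmeticFunction.mul_apply
  rw [coe_zeta_mul_moebius] at h
  have h2 : ∑ p ∈ m.divisorsAntidiagonal, (zeta p.1 : ℤ) * moebius p.2 =
      ∑ p ∈ m.divisorsAntidiagonal, moebius p.2 := by
    refine Finset.sum_congr rfl fun p hp => ?_
    rw [ArithmeticFunction.zeta_apply_ne (Nat.left_ne_zero_of_mem_divisorsAntidiagonal hp)]
    push_cast; ring
  rw [h2] at h
  have := congrArg (fun z : ℤ => (z : ℂ)) h.symm
  simpa [ArithmeticFunction.one_apply, apply_ite (fun z : ℤ => (z : ℂ))] using this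

lemma dual_hecke (lam : ℕ → ℂ) (χ : ℕ → ℂ)
    (hχ : ∀ a b : ℕ, χ (a * b) = χ a * χ b) (hχ1 : χ 1 = 1)
    (hHecke : ∀ a b : ℕ, 0 < a → 0 < b →
      lam (a * b) = ∑ d ∈ (Nat.gcd a b).divisors,
        ((moebius d : ℤ) : ℂ) * χ d * lam (a / d) * lam (b / d))
    (a b : ℕ) (ha : 0 < a) (hb : 0 < b) :
    lam a * lam b = ∑ k ∈ (Nat.gcd a b).divisors, χ k * lam ((a / k) * (b / k)) := by
  set N := Nat.gcd a b with hN
  have hN0 : N ≠ 0 := Nat.gcd_ne_zero_left ha.ne'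
  have step1 : ∑ k ∈ N.divisors, χ k * lam ((a / k) * (b / k)) =
      ∑ k ∈ N.divisors, ∑ d ∈ (Nat.gcd (a / k) (b / k)).divisors,
        χ k * (((moebius d : ℤ) : ℂ) * χ d * lam (a / k / d) * lam (b / k / d)) := by
    refine Finset.sum_congr rfl fun k hk => ?_
    obtain ⟨hkN, -⟩ := Nat.mem_divisors.mp hk
    have hka : k ∣ a := hkN.trans (Nat.gcd_dvd_left a b)
    have hkb : k ∣ b := hkN.trans (Nat.gcd_dvd_right a b)
    have hk0 : 0 < k := Nat.pos_of_dvd_of_pos hka ha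
    rw [hHecke (a / k) (b / k) (Nat.div_pos (Nat.le_of_dvd ha hka) hk0)
      (Nat.div_pos (Nat.le_of_dvd hb hkb) hk0), Finset.mul_sum]
  rw [step1, sum_divisors_sigma_eq a b ha hb
    (fun k d => χ k * (((moebius d : ℤ) : ℂ) * χ d * lam (a / k / d) * lam (b / k / d)))]
  have step2 : ∀ m ∈ N.divisors,
      ∑ p ∈ m.divisorsAntidiagonal,
        χ p.1 * (((moebius p.2 : ℤ) : ℂ) * χ p.2 * lam (a / p.1 / p.2) * lam (b / p.1 / p.2)) =
      (if m = 1 then 1 else 0) * (χ m * lam (a / m) * lam (b / m)) := by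
    intro m hm
    obtain ⟨hmN, -⟩ := Nat.mem_divisors.mp hm
    have hsum : ∀ p ∈ m.divisorsAntidiagonal,
        χ p.1 * (((moebius p.2 : ℤ) : ℂ) * χ p.2 * lam (a / p.1 / p.2) * lam (b / p.1 / p.2)) =
        ((moebius p.2 : ℤ) : ℂ) * (χ m * lam (a / m) * lam (b / m)) := by
      rintro ⟨k, d⟩ hp
      obtain ⟨hkd, -⟩ := Nat.mem_divisorsAntidiagonal.mp hp
      simp only at hkd ⊢
      rw [Nat.div_div_eq_div_mul, Nat.div_div_eq_div_mul, hkd, ← hkd, hχ]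
      ring
    rw [Finset.sum_congr rfl hsum, ← Finset.sum_mul, sum_moebius_snd m]
  rw [Finset.sum_congr rfl step2, Finset.sum_eq_single_of_mem 1
    (Nat.one_mem_divisors.mpr hN0) (by intro m hm hne; rw [if_neg hne, zero_mul])]
  simp [hχ1]

lemma natCast_cpow_mul' (m n : ℕ) (s : ℂ) :
    (((m * n : ℕ) : ℂ)) ^ s = ((m : ℂ)) ^ s * ((n : ℂ)) ^ s := by
  have := Complex.mul_cpow_ofReal_nonneg (Nat.cast_nonneg (α := ℝ) m)
    (Nat.cast_nonneg (α := ℝ) n) s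
  push_cast at this ⊢
  exact this

lemma key_pointwise (lam : ℕ → ℂ) (χ : ℕ → ℂ)
    (hχ : ∀ a b : ℕ, χ (a * b) = χ a * χ b) (hχ1 : χ 1 = 1)
    (hHecke : ∀ a b : ℕ, 0 < a → 0 < b →
      lam (a * b) = ∑ d ∈ (Nat.gcd a b).divisors,
        ((moebius d : ℤ) : ℂ) * χ d * lam (a / d) * lam (b / d))
    (d₁ : ℕ) (hd₁ : Squarefree d₁) (n : ℕ) (hn : 0 < n) :
    ∑ e ∈ (Nat.gcd d₁ n).divisors, χ e * lam (d₁ * (n / e) ^ 2) = lam d₁ * lam (n ^ 2) := by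
  have hd0 : 0 < d₁ := hd₁.ne_zero.bot_lt
  have hgcd : Nat.gcd d₁ (n ^ 2) = Nat.gcd d₁ n := by
    refine Nat.dvd_antisymm ?_ ?_
    · exact Nat.dvd_gcd (Nat.gcd_dvd_left _ _)
        (((hd₁.squarefree_of_dvd (Nat.gcd_dvd_left _ _)).dvd_pow_iff_dvd two_ne_zero).mp
          (Nat.gcd_dvd_right _ _))
    · exact Nat.dvd_gcd (Nat.gcd_dvd_left _ _)
        ((Nat.gcd_dvd_right _ _).trans (dvd_pow_self n two_ne_zero))
  rw [dual_hecke lam χ hχ hχ1 hHecke d₁ (n ^ 2) hd0 (pow_pos hn 2), hgcd]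
  refine Finset.sum_congr rfl fun e he => ?_
  obtain ⟨hed, -⟩ := Nat.mem_divisors.mp he
  have hen : e ∣ n := (Nat.dvd_gcd_iff.mp hed).2
  have hed₁ : e ∣ d₁ := (Nat.dvd_gcd_iff.mp hed).1
  have he0 : 0 < e := Nat.pos_of_dvd_of_pos hed₁ hd0
  obtain ⟨c, hc⟩ := hed₁
  obtain ⟨m, hm⟩ := hen
  subst hc hm
  congr 1
  rw [Nat.mul_div_cancel_left _ he0, Nat.mul_div_cancel_left _ he0]
  have h2 : (e * m) ^ 2 = e * (e * m ^ 2) := by ring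
  rw [h2, Nat.mul_div_cancel_left _ he0]
  ring

lemma prod_to_sum (χ : ℕ → ℂ) (hχ : ∀ a b : ℕ, χ (a * b) = χ a * χ b) (hχ1 : χ 1 = 1)
    (d₁ : ℕ) (hd₁ : Squarefree d₁) (s : ℂ) :
    ∏ p ∈ d₁.primeFactors, (1 + χ p * ((p : ℕ) : ℂ) ^ (-s)) =
      ∑ e ∈ d₁.divisors, χ e * ((e : ℕ) : ℂ) ^ (-s) := by
  set F : ArithmeticFunction ℂ :=
    ⟨fun e => if e = 0 then 0 else χ e * ((e : ℕ) : ℂ) ^ (-s), if_pos rfl⟩ with hF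
  have hFapp : ∀ e : ℕ, e ≠ 0 → F e = χ e * ((e : ℕ) : ℂ) ^ (-s) := by
    intro e he
    simp [hF, ArithmeticFunction.coe_mk, if_neg he]
  have hmult : F.IsMultiplicative := by
    refine ⟨?_, ?_⟩
    · rw [hFapp 1 one_ne_zero]
      simp [hχ1]
    · intro m n hmn
      rcases eq_or_ne m 0 with rfl | hm
      · simp [hF]
      rcases eq_or_ne n 0 with rfl | hn
      · simp [hF]
      rw [hFapp _ (mul_ne_zero hm hn), hFapp _ hm, hFapp _ hn, hχ, natCast_cpow_mul']
      ring
  have := hmult.prodPrimeFactors_one_add_of_squarefree hd₁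
  rw [Finset.prod_congr rfl (fun p hp => by
      rw [hFapp p (Nat.prime_of_mem_primeFactors hp).ne_zero]) ] at this
  rw [this]
  exact Finset.sum_congr rfl fun e he => hFapp e (Nat.pos_of_mem_divisors he).ne'

theorem hecke_square_dirichlet_series (lam : ℕ → ℂ) (χ : ℕ → ℂ)
    (hχ : ∀ a b : ℕ, χ (a * b) = χ a * χ b)
    (hHecke : ∀ a b : ℕ, 0 < a → 0 < b →
      lam (a * b) = ∑ d ∈ (Nat.gcd a b).divisors,
        ((moebius d : ℤ) : ℂ) * χ d * lam (a / d) * lam (b / d))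
    (d₁ : ℕ) (hd₁ : Squarefree d₁) (s : ℂ)
    (h₁ : Summable fun m : ℕ+ => ‖lam (d₁ * (m : ℕ) ^ 2) * ((m : ℕ) : ℂ) ^ (-s)‖)
    (h₂ : Summable fun m : ℕ+ => ‖lam ((m : ℕ) ^ 2) * ((m : ℕ) : ℂ) ^ (-s)‖) :
    (∏ p ∈ d₁.primeFactors, (1 + χ p * ((p : ℕ) : ℂ) ^ (-s))) *
        ∑' m : ℕ+, lam (d₁ * (m : ℕ) ^ 2) * ((m : ℕ) : ℂ) ^ (-s) =
      lam d₁ * ∑' m : ℕ+, lam ((m : ℕ) ^ 2) * ((m : ℕ) : ℂ) ^ (-s) := by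
  have hd0 : 0 < d₁ := hd₁.ne_zero.bot_lt
  by_cases hχ1 : χ 1 = 1
  swap
  · -- degenerate case: χ 1 = 0, everything vanishes
    have hsq : χ 1 * χ 1 = χ 1 := ((hχ 1 1).symm.trans (by rw [mul_one]))
    have hχ10 : χ 1 = 0 := by
      rcases mul_eq_zero.mp (show χ 1 * (χ 1 - 1) = 0 by linear_combination hsq) with h | h
      · exact h
      · exact absurd (sub_eq_zero.mp h) hχ1
    have hχ0 : ∀ m, χ m = 0 := fun m => by
      have := hχ m 1
      rw [mul_one] at this
      rw [this, hχ10, mul_zero]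
    have hlam : ∀ a b : ℕ, 0 < a → 0 < b → lam (a * b) = 0 := by
      intro a b ha hb
      rw [hHecke a b ha hb]
      exact Finset.sum_eq_zero fun d _ => by rw [hχ0 d]; ring
    have hld : lam d₁ = 0 := by simpa using hlam d₁ 1 hd0 one_pos
    have hl1 : (fun m : ℕ+ => lam (d₁ * (m : ℕ) ^ 2) * ((m : ℕ) : ℂ) ^ (-s)) = fun _ => 0 := by
      funext m
      rw [hlam d₁ ((m : ℕ) ^ 2) hd0 (pow_pos m.pos 2), zero_mul]
    rw [hl1, tsum_zero, mul_zero, hld, zero_mul]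
  -- main case
  set T : ℕ+ → ℂ := fun m => lam (d₁ * (m : ℕ) ^ 2) * ((m : ℕ) : ℂ) ^ (-s) with hT
  have hTsum : Summable T := h₁.of_norm
  set g : ℕ → ℕ+ → ℂ := fun e n =>
    if e ∣ (n : ℕ) then χ e * lam (d₁ * ((n : ℕ) / e) ^ 2) * ((n : ℕ) : ℂ) ^ (-s) else 0
    with hg
  have hcomp : ∀ e : ℕ, ∀ he : 0 < e, ∀ m : ℕ+,
      g e ((e.toPNat he) * m) = χ e * ((e : ℕ) : ℂ) ^ (-s) * T m := by
    intro e he m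
    have hcm : (((e.toPNat he) * m : ℕ+) : ℕ) = e * (m : ℕ) := rfl
    rw [hg]
    simp only [hcm]
    rw [if_pos (dvd_mul_right e (m : ℕ)), Nat.mul_div_cancel_left _ he, natCast_cpow_mul', hT]
    ring
  have hinj : ∀ e : ℕ, ∀ he : 0 < e,
      Function.Injective fun m : ℕ+ => (e.toPNat he) * m :=
    fun e he x y h => mul_left_cancel h
  have hsupp : ∀ e : ℕ, ∀ he : 0 < e,
      Function.support (g e) ⊆ Set.range (fun m : ℕ+ => (e.toPNat he) * m) := by
    intro e he n hn
    have hdvd : e ∣ (n : ℕ) := by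
      by_contra hc
      exact hn (by rw [hg]; simp only; rw [if_neg hc])
    refine ⟨⟨(n : ℕ) / e, Nat.div_pos (Nat.le_of_dvd n.pos hdvd) he⟩, ?_⟩
    apply PNat.coe_injective
    exact Nat.mul_div_cancel' hdvd
  have hsummable : ∀ e ∈ d₁.divisors, Summable (g e) := by
    intro e hee
    have he : 0 < e := Nat.pos_of_mem_divisors hee
    have h1' : Summable ((g e) ∘ fun m : ℕ+ => (e.toPNat he) * m) := by
      have : ((g e) ∘ fun m : ℕ+ => (e.toPNat he) * m) =
          fun m => χ e * ((e : ℕ) : ℂ) ^ (-s) * T m := funext fun m => hcomp e he m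
      rw [this]
      exact hTsum.mul_left _
    exact ((hinj e he).summable_iff (fun x hx => by
      by_contra hc
      exact hx (hsupp e he hc))).mp h1'
  have htsum_e : ∀ e ∈ d₁.divisors,
      ∑' m : ℕ+, χ e * ((e : ℕ) : ℂ) ^ (-s) * T m = ∑' n : ℕ+, g e n := by
    intro e hee
    have he : 0 < e := Nat.pos_of_mem_divisors hee
    rw [← (hinj e he).tsum_eq (hsupp e he)]
    exact tsum_congr fun m => (hcomp e he m).symm
  have hpoint : ∀ n : ℕ+, ∑ e ∈ d₁.divisors, g e n =
      lam d₁ * lam ((n : ℕ) ^ 2) * ((n : ℕ) : ℂ) ^ (-s) := by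
    intro n
    have hfil : d₁.divisors.filter (· ∣ (n : ℕ)) = (Nat.gcd d₁ (n : ℕ)).divisors := by
      ext e
      simp only [Finset.mem_filter, Nat.mem_divisors, Nat.dvd_gcd_iff, ne_eq,
        Nat.gcd_eq_zero_iff]
      have hne : d₁ ≠ 0 := hd₁.ne_zero
      tauto
    calc ∑ e ∈ d₁.divisors, g e n
        = ∑ e ∈ d₁.divisors.filter (· ∣ (n : ℕ)),
            χ e * lam (d₁ * ((n : ℕ) / e) ^ 2) * ((n : ℕ) : ℂ) ^ (-s) := by
          rw [Finset.sum_filter]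
      _ = (∑ e ∈ (Nat.gcd d₁ (n : ℕ)).divisors,
            χ e * lam (d₁ * ((n : ℕ) / e) ^ 2)) * ((n : ℕ) : ℂ) ^ (-s) := by
          rw [hfil, Finset.sum_mul]
      _ = lam d₁ * lam ((n : ℕ) ^ 2) * ((n : ℕ) : ℂ) ^ (-s) := by
          rw [key_pointwise lam χ hχ hχ1 hHecke d₁ hd₁ (n : ℕ) n.pos]
  calc (∏ p ∈ d₁.primeFactors, (1 + χ p * ((p : ℕ) : ℂ) ^ (-s))) * ∑' m : ℕ+, T m
      = (∑ e ∈ d₁.divisors, χ e * ((e : ℕ) : ℂ) ^ (-s)) * ∑' m : ℕ+, T m := by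
        rw [prod_to_sum χ hχ hχ1 d₁ hd₁ s]
    _ = ∑ e ∈ d₁.divisors, ∑' m : ℕ+, χ e * ((e : ℕ) : ℂ) ^ (-s) * T m := by
        rw [Finset.sum_mul]
        exact Finset.sum_congr rfl fun e _ => (tsum_mul_left).symm
    _ = ∑ e ∈ d₁.divisors, ∑' n : ℕ+, g e n :=
        Finset.sum_congr rfl htsum_e
    _ = ∑' n : ℕ+, ∑ e ∈ d₁.divisors, g e n := (Summable.tsum_finsetSum hsummable).symm
    _ = ∑' n : ℕ+, lam d₁ * lam ((n : ℕ) ^ 2) * ((n : ℕ) : ℂ) ^ (-s) :=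
        tsum_congr hpoint
    _ = lam d₁ * ∑' m : ℕ+, lam ((m : ℕ) ^ 2) * ((m : ℕ) : ℂ) ^ (-s) := by
        rw [← tsum_mul_left]
        exact tsum_congr fun n => by ring
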